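/- Let X be a compact topological space and let μ be a finite Borel measure on X with V := μ(X) > 0. Let K > 0 and let (f_n)_{n∈ℕ} be a sequence of continuous functions f_n : X → ℝ such that f_n(p) ≤ f_{n+1}(p) for every n ∈ ℕ and every p ∈ X, and such that ∫_X min(f_n(p), 0) dμ(p) → −K/2 as n → ∞. Then there exists a point p ∈ X such that f_n(p) ≤ −K/(3V) for every n ∈ ℕ. -/

import Mathlib

open MeasureTheory Filter

/-- On a compact space with a finite Borel measure of positive total mass `V`,
if continuous functions `f n` are pointwise nondecreasing in `n` and
`∫ min(f n, 0) dμ → -K/2` with `K > 0`, then there is a point `p` with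
`f n p ≤ -K/(3V)` for all `n`. -/
theorem stmt_7 {X : Type*} [TopologicalSpace X] [CompactSpace X]
    [MeasurableSpace X] [BorelSpace X] (μ : Measure X) [IsFiniteMeasure μ]
    (V : ℝ) (hV : V = (μ Set.univ).toReal) (hVpos : 0 < V)
    (K : ℝ) (hK : 0 < K)
    (f : ℕ → X → ℝ)
    (hcont : ∀ n, Continuous (f n))
    (hmono : ∀ n, ∀ p : X, f n p ≤ f (n + 1) p)
    (hlim : Tendsto (fun n => ∫ p, min (f n p) 0 ∂μ) atTop (nhds (-K / 2))) :
    ∃ p : X, ∀ n : ℕ, f n p ≤ -K / (3 * V) := by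
  set c : ℝ := -K / (3 * V) with hc
  have hcneg : c < 0 := by
    apply div_neg_of_neg_of_pos <;> linarith
  have hint : ∀ n, Integrable (fun p => min (f n p) 0) μ :=
    fun n => ((hcont n).min continuous_const).integrable_of_hasCompactSupport
      (isClosed_tsupport _).isCompact
  -- the integrals are monotone in n
  have hintmono : Monotone (fun n => ∫ p, min (f n p) 0 ∂μ) := by
    apply monotone_nat_of_le_succ
    intro n
    exact integral_mono (hint n) (hint (n + 1))
      (fun p => min_le_min (hmono n p) le_rfl)
  have hle : ∀ n, (∫ p, min (f n p) 0 ∂μ) ≤ -K / 2 := hintmono.ge_of_tendsto hlim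
  -- each level set is nonempty
  set C : ℕ → Set X := fun n => {p | f n p ≤ c} with hC
  have hCne : ∀ n, (C n).Nonempty := by
    intro n
    by_contra h
    rw [Set.not_nonempty_iff_eq_empty] at h
    have hptwise : ∀ p, c ≤ min (f n p) 0 := by
      intro p
      have hnp : ¬ f n p ≤ c := fun hp => (Set.notMem_empty p) (h ▸ (hp : p ∈ C n))
      exact le_min (le_of_not_ge hnp) hcneg.le
    have hlow : (μ Set.univ).toReal • c ≤ ∫ p, min (f n p) 0 ∂μ := by
      change μ.real Set.univ • c ≤ _
      rw [← integral_const]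
      exact integral_mono (integrable_const c) (hint n) hptwise
    rw [← hV] at hlow
    have : V * c = -K / 3 := by
      rw [hc]
      field_simp
    rw [smul_eq_mul, this] at hlow
    have := hle n
    linarith
  have hCsub : ∀ n, C (n + 1) ⊆ C n := by
    intro n p hp
    exact le_trans (hmono n p) hp
  have hCcl : ∀ n, IsClosed (C n) := fun n => isClosed_le (hcont n) continuous_const
  obtain ⟨p, hp⟩ := IsCompact.nonempty_iInter_of_sequence_nonempty_isCompact_isClosed
    C hCsub hCne ((hCcl 0).isCompact) hCcl
  exact ⟨p, fun n => Set.mem_iInter.1 hp n⟩
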